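/- In the majority-coordination meta-game, let Γ¹_* be the meta-action of LLM 1 that places probability 1/2 on the role-homogeneous pure meta-action instructing action 0 in all three roles and probability 1/2 on the one instructing action 1 in all three roles. If p > 1/2, then for every meta-action Γ² of LLM 2, Ū^1(Γ¹_*, Γ²) ≥ 100/3 + (50/3)(1−p)(2p−1); in particular LLM 1 guarantees itself an average utility strictly greater than 100/3. -/

import Mathlib

open Finset

namespace MetaGame

/-- A mixed action over a finite action set: a probability vector. -/
def Mixed (α : Type) [Fintype α] : Type :=
  {f : α → ℝ // (∀ a, 0 ≤ f a) ∧ ∑ a, f a = 1}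

/-- The point-mass (Dirac) mixed action on `a`. -/
noncomputable def Mixed.dirac {α : Type} [Fintype α] [DecidableEq α] (a : α) : Mixed α :=
  ⟨fun b => if b = a then 1 else 0,
    fun b => by by_cases h : b = a <;> simp [h],
    by simp⟩

/-- A finitely supported probability distribution on `α`. -/
structure FinDist (α : Type) where
  support : Finset α
  w : α → ℝ
  nonneg : ∀ x, 0 ≤ w x
  sum_one : ∑ x ∈ support, w x = 1
  zero_of_not_mem : ∀ x, x ∉ support → w x = 0

/-- The point mass distribution on `x`. -/
noncomputable def FinDist.pure {α : Type} (x : α) : FinDist α := by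
  classical
  exact
    { support := {x}
      w := fun y => if y = x then 1 else 0
      nonneg := fun y => by by_cases h : y = x <;> simp [h]
      sum_one := by simp
      zero_of_not_mem := fun y hy => by
        simp only [Finset.mem_singleton] at hy
        simp [hy] }

variable {m k : ℕ} {A : Fin m → Type} [∀ i, Fintype (A i)] [∀ i, DecidableEq (A i)]

/-- Multilinear extension of a payoff function to profiles of mixed actions. -/
noncomputable def expPay (u : (∀ r : Fin m, A r) → ℝ) (σ : ∀ r, Mixed (A r)) : ℝ :=
  ∑ a : ∀ r : Fin m, A r, (∏ r, (σ r).1 (a r)) * u a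

/-- A pure meta-action: a mixed action for each role. -/
abbrev PureMeta (A : Fin m → Type) [∀ i, Fintype (A i)] : Type := ∀ i, Mixed (A i)

/-- The role-homogeneous pure meta-action instructing pure action `a i` in each role `i`. -/
noncomputable def diracProfile (a : ∀ i : Fin m, A i) : PureMeta A := fun i => Mixed.dirac (a i)

/-- Utility of LLM `j` under a profile of pure meta-actions. -/
noncomputable def Upure (u : ∀ i : Fin m, (∀ r : Fin m, A r) → ℝ) (p : Fin m → Fin k → ℝ)
    (j : Fin k) (M : Fin k → PureMeta A) : ℝ :=
  ∑ i, ∑ g : Fin m → Fin k,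
    if g i = j then (∏ r, p r (g r)) * expPay (u i) (fun r => M (g r) r) else 0

/-- Utility of LLM `j` under a profile of (finitely supported, independent) meta-actions. -/
noncomputable def U (u : ∀ i : Fin m, (∀ r : Fin m, A r) → ℝ) (p : Fin m → Fin k → ℝ)
    (Γ : Fin k → FinDist (PureMeta A)) (j : Fin k) : ℝ :=
  ∑ M ∈ Fintype.piFinset (fun j' => (Γ j').support),
    (∏ j', (Γ j').w (M j')) * Upure u p j M

/-- Nash equilibrium of the one-shot meta-game. -/
def Nash (u : ∀ i : Fin m, (∀ r : Fin m, A r) → ℝ) (p : Fin m → Fin k → ℝ)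
    (Γ : Fin k → FinDist (PureMeta A)) : Prop :=
  ∀ (j : Fin k) (Γ' : FinDist (PureMeta A)),
    U u p (Function.update Γ j Γ') j ≤ U u p Γ j

/-- Average utility of the clients governed by LLM `j`. -/
noncomputable def avgU (u : ∀ i : Fin m, (∀ r : Fin m, A r) → ℝ) (p : Fin m → Fin k → ℝ)
    (Γ : Fin k → FinDist (PureMeta A)) (j : Fin k) : ℝ :=
  U u p Γ j / ∑ i, p i j

/-- A meta-action is role-homogeneous if every pure meta-action in its support is a
tuple of point-mass mixed actions. -/
def RoleHomogeneous (Γ : FinDist (PureMeta A)) : Prop :=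
  ∀ M ∈ Γ.support, ∃ a : ∀ i : Fin m, A i, M = diracProfile a


/-- Majority-coordination payoffs with three roles and actions `{0,1}` (encoded as `Bool`): if
all three roles choose the same action each receives `100/3`; if exactly two coincide those two
receive `50` each and the third receives `0`. -/
noncomputable def mcu (i : Fin 3) (a : ∀ _ : Fin 3, Bool) : ℝ :=
  if a 0 = a 1 ∧ a 1 = a 2 then 100 / 3
  else if (Finset.univ.filter (fun r => a r = a i)).card = 2 then 50 else 0

/-- Client shares in the two-LLM majority-coordination meta-game: LLM `0` governs a share `pp`
of each role, LLM `1` the remaining `1 - pp`. -/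
def mcp (pp : ℝ) : Fin 3 → Fin 2 → ℝ := fun _ j => if j = 0 then pp else 1 - pp

private theorem sum_fn3 {α β : Type} [Fintype α] [DecidableEq α] [AddCommMonoid β]
    (f : (Fin 3 → α) → β) :
    ∑ g : Fin 3 → α, f g = ∑ x, ∑ y, ∑ z, f ![x, y, z] := by
  have : ∑ g : Fin 3 → α, f g = ∑ p : α × α × α, f ![p.1, p.2.1, p.2.2] := by
    apply (Fintype.sum_bijective (fun p : α × α × α => ![p.1, p.2.1, p.2.2]) ?_ _ _ ?_).symm
    · constructor
      · intro a b h
        have h0 := congrFun h 0; have h1 := congrFun h 1; have h2 := congrFun h 2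
        simp at h0 h1 h2
        exact Prod.ext h0 (Prod.ext h1 h2)
      · intro g
        exact ⟨(g 0, g 1, g 2), by funext i; fin_cases i <;> simp⟩
    · intro p; rfl
  rw [this, Fintype.sum_prod_type]
  refine Finset.sum_congr rfl fun x _ => ?_
  rw [Fintype.sum_prod_type]

private theorem sum_piFinset2 {α β : Type} [DecidableEq α] [AddCommMonoid β] (S : Fin 2 → Finset α)
    (f : (Fin 2 → α) → β) :
    ∑ M ∈ Fintype.piFinset S, f M = ∑ a ∈ S 0, ∑ b ∈ S 1, f ![a, b] := by
  rw [← Finset.sum_product']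
  apply Finset.sum_bij' (fun M _ => (M 0, M 1)) (fun p _ => ![p.1, p.2])
  · intro M hM; simp [Fintype.mem_piFinset] at hM
    simp [Finset.mem_product, hM.1, hM.2]
  · intro p hp; simp [Finset.mem_product] at hp
    simp [Fintype.mem_piFinset]
    exact hp
  · intro M hM; funext i; fin_cases i <;> simp
  · intro p hp; simp
  · intro M hM; congr 1; funext i; fin_cases i <;> simp

private theorem Upure_nonneg (pp : ℝ) (h0 : 0 ≤ pp) (h1 : pp ≤ 1) (j : Fin 2)
    (M : Fin 2 → PureMeta (fun _ : Fin 3 => Bool)) :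
    0 ≤ Upure mcu (mcp pp) j M := by
  unfold Upure
  apply Finset.sum_nonneg; intro i _
  apply Finset.sum_nonneg; intro g _
  split
  · apply mul_nonneg
    · apply Finset.prod_nonneg; intro r _
      unfold mcp; split <;> linarith
    · unfold expPay; apply Finset.sum_nonneg; intro a _
      apply mul_nonneg
      · exact Finset.prod_nonneg fun r _ => (M (g r) r).2.1 _
      · unfold mcu; split_ifs <;> norm_num
  · exact le_refl _

private theorem key_ineq (pp : ℝ) (hp0 : 0 ≤ pp) (hp1 : pp ≤ 1) (M2 : Fin 3 → Mixed Bool) :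
    3 * pp * (100 / 3 + (50 / 3) * (1 - pp) * (2 * pp - 1)) ≤
      1 / 2 * Upure mcu (mcp pp) 0 ![diracProfile (fun _ => false), M2] +
      1 / 2 * Upure mcu (mcp pp) 0 ![diracProfile (fun _ => true), M2] := by
  have hs : ∀ r : Fin 3, (M2 r).1 true = 1 - (M2 r).1 false := by
    intro r
    have := (M2 r).2.2
    rw [Fintype.sum_bool] at this
    linarith
  have hq0 : ∀ r : Fin 3, 0 ≤ (M2 r).1 false := fun r => (M2 r).2.1 false
  have hq1 : ∀ r : Fin 3, (M2 r).1 false ≤ 1 := by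
    intro r
    have h := (M2 r).2.1 true
    rw [hs r] at h
    linarith
  simp only [Upure, expPay, sum_fn3, Fin.sum_univ_three, Fin.sum_univ_two, Fin.prod_univ_three,
    Fintype.sum_bool, mcp, mcu, diracProfile, Mixed.dirac, Matrix.cons_val_zero,
    Matrix.cons_val_one, Matrix.head_cons, Matrix.cons_val_two, Matrix.tail_cons]
  norm_num
  simp (config := { decide := true }) only [if_true, if_false]
  rw [hs 0, hs 1, hs 2]
  set q0 := (M2 0).1 false with hq0def
  set q1 := (M2 1).1 false with hq1def
  set q2 := (M2 2).1 false with hq2def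
  nlinarith [mul_nonneg (mul_nonneg (mul_nonneg hp0 (mul_nonneg (sub_nonneg.2 hp1) (sub_nonneg.2 hp1))) (sub_nonneg.2 (hq1 0))) (hq0 1),
    mul_nonneg (mul_nonneg (mul_nonneg hp0 (mul_nonneg (sub_nonneg.2 hp1) (sub_nonneg.2 hp1))) (sub_nonneg.2 (hq1 1))) (hq0 2),
    mul_nonneg (mul_nonneg (mul_nonneg hp0 (mul_nonneg (sub_nonneg.2 hp1) (sub_nonneg.2 hp1))) (sub_nonneg.2 (hq1 2))) (hq0 0),
    mul_nonneg (mul_nonneg (mul_nonneg hp0 (mul_nonneg (sub_nonneg.2 hp1) (sub_nonneg.2 hp1))) (sub_nonneg.2 (hq1 1))) (hq0 0),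
    mul_nonneg (mul_nonneg (mul_nonneg hp0 (mul_nonneg (sub_nonneg.2 hp1) (sub_nonneg.2 hp1))) (sub_nonneg.2 (hq1 2))) (hq0 1),
    mul_nonneg (mul_nonneg (mul_nonneg hp0 (mul_nonneg (sub_nonneg.2 hp1) (sub_nonneg.2 hp1))) (sub_nonneg.2 (hq1 0))) (hq0 2)]
/-- In the majority-coordination meta-game with `p > 1/2`, the meta-action of LLM `1` that mixes
uniformly between the two coordinated instructions `(0,0,0)` and `(1,1,1)` guarantees it an
average utility of at least `100/3 + (50/3)(1−p)(2p−1) > 100/3`, whatever LLM `2` plays. -/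
theorem mc_large_llm_guarantee
    (pp : ℝ) (hpp : 1 / 2 < pp) (hpp1 : pp < 1)
    (Γ1 : FinDist (PureMeta (fun _ : Fin 3 => Bool)))
    (h0 : Γ1.w (diracProfile (fun _ => false)) = 1 / 2)
    (h1 : Γ1.w (diracProfile (fun _ => true)) = 1 / 2) :
    ∀ Γ2 : FinDist (PureMeta (fun _ : Fin 3 => Bool)),
      100 / 3 + (50 / 3) * (1 - pp) * (2 * pp - 1) ≤ avgU mcu (mcp pp) ![Γ1, Γ2] 0 ∧
      100 / 3 < avgU mcu (mcp pp) ![Γ1, Γ2] 0 := by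
  classical
  intro Γ2
  set D0 : PureMeta (fun _ : Fin 3 => Bool) := diracProfile (fun _ => false) with hD0
  set D1 : PureMeta (fun _ : Fin 3 => Bool) := diracProfile (fun _ => true) with hD1
  have hp0 : (0:ℝ) ≤ pp := by linarith
  have hp1 : pp ≤ 1 := le_of_lt hpp1
  have hD0mem : D0 ∈ Γ1.support := by
    by_contra h
    have := Γ1.zero_of_not_mem _ h
    rw [h0] at this; norm_num at this
  have hD1mem : D1 ∈ Γ1.support := by
    by_contra h
    have := Γ1.zero_of_not_mem _ h
    rw [h1] at this; norm_num at this
  have hne : D0 ≠ D1 := by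
    intro h
    have := congrArg (fun M : PureMeta (fun _ : Fin 3 => Bool) => (M 0).1 false) h
    simp [hD0, hD1, diracProfile, Mixed.dirac] at this
  set bnd : ℝ := 100 / 3 + (50 / 3) * (1 - pp) * (2 * pp - 1) with hbnd
  have hUB : 3 * pp * bnd ≤ U mcu (mcp pp) ![Γ1, Γ2] 0 := by
    rw [U, sum_piFinset2]
    simp only [Matrix.cons_val_zero, Matrix.cons_val_one, Matrix.head_cons, Fin.prod_univ_two]
    set B : PureMeta (fun _ : Fin 3 => Bool) → ℝ := fun a =>
      ∑ b ∈ Γ2.support, Γ1.w a * Γ2.w b * Upure mcu (mcp pp) 0 ![a, b] with hB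
    have hBnonneg : ∀ a, 0 ≤ B a := by
      intro a
      apply Finset.sum_nonneg; intro b _
      exact mul_nonneg (mul_nonneg (Γ1.nonneg a) (Γ2.nonneg b)) (Upure_nonneg pp hp0 hp1 0 _)
    have step1 : 3 * pp * bnd = ∑ b ∈ Γ2.support, Γ2.w b * (3 * pp * bnd) := by
      rw [← Finset.sum_mul, Γ2.sum_one, one_mul]
    have step2 : ∑ b ∈ Γ2.support, Γ2.w b * (3 * pp * bnd) ≤ B D0 + B D1 := by
      rw [hB]
      rw [← Finset.sum_add_distrib]
      apply Finset.sum_le_sum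
      intro b _
      have hk := key_ineq pp hp0 hp1 b
      have := mul_le_mul_of_nonneg_left hk (Γ2.nonneg b)
      rw [hbnd]
      calc Γ2.w b * (3 * pp * (100 / 3 + (50 / 3) * (1 - pp) * (2 * pp - 1)))
          ≤ Γ2.w b * (1 / 2 * Upure mcu (mcp pp) 0 ![D0, b] +
              1 / 2 * Upure mcu (mcp pp) 0 ![D1, b]) := this
        _ = Γ1.w D0 * Γ2.w b * Upure mcu (mcp pp) 0 ![D0, b] +
              Γ1.w D1 * Γ2.w b * Upure mcu (mcp pp) 0 ![D1, b] := by
            rw [h0, h1]; ring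
    have step3 : B D0 + B D1 ≤ ∑ a ∈ Γ1.support, B a := by
      rw [← Finset.sum_pair hne]
      apply Finset.sum_le_sum_of_subset_of_nonneg
      · intro a ha
        simp only [Finset.mem_insert, Finset.mem_singleton] at ha
        rcases ha with rfl | rfl
        · exact hD0mem
        · exact hD1mem
      · intro a _ _; exact hBnonneg a
    calc 3 * pp * bnd = ∑ b ∈ Γ2.support, Γ2.w b * (3 * pp * bnd) := step1
      _ ≤ B D0 + B D1 := step2
      _ ≤ ∑ a ∈ Γ1.support, B a := step3
  have hden : ∑ i : Fin 3, mcp pp i 0 = 3 * pp := by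
    simp [mcp, Fin.sum_univ_three]
  have hdpos : (0:ℝ) < 3 * pp := by linarith
  have havg : bnd ≤ avgU mcu (mcp pp) ![Γ1, Γ2] 0 := by
    rw [avgU, hden, le_div_iff₀ hdpos]
    linarith [hUB]
  constructor
  · exact havg
  · have : 100 / 3 < bnd := by
      rw [hbnd]; nlinarith
    exact lt_of_lt_of_le this havg

end MetaGame
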